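/- Let a, b, c, d, p, q, r, s, w be integers satisfying a·p + b·q = 1 + a·b and c·r + d·s = 1 + c·d, and set u = a·c + b·d and v = a·d − b·c. If u·w ≡ 1 (mod v), then (c² + d²)·(a·r − b·(c − s))·w ≡ 1 (mod v); that is, (a·r − b·(c − s))·w represents the modular inverse of c² + d² modulo v. -/
import Mathlib

theorem inverse_of_sum_of_squares_cd_mod_v
    (a b c d p q r s w : ℤ)
    (hab : a * p + b * q = 1 + a * b)
    (hcd : c * r + d * s = 1 + c * d)
    (hw : (a * c + b * d) * w ≡ 1 [ZMOD a * d - b * c]) :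
    (c ^ 2 + d ^ 2) * ((a * r - b * (c - s)) * w) ≡ 1 [ZMOD a * d - b * c] := by
  have h1 : (c ^ 2 + d ^ 2) * (a * r - b * (c - s)) ≡ a * c + b * d [ZMOD a * d - b * c] := by
    have : (a * d - b * c) ∣ (c ^ 2 + d ^ 2) * (a * r - b * (c - s)) - (a * c + b * d) := by
      refine ⟨c ^ 2 + r * d - s * c, ?_⟩
      linear_combination (a * c + b * d) * hcd
    exact (Int.modEq_iff_dvd.mpr this).symm
  calc (c ^ 2 + d ^ 2) * ((a * r - b * (c - s)) * w)
      = ((c ^ 2 + d ^ 2) * (a * r - b * (c - s))) * w := by ring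
    _ ≡ (a * c + b * d) * w [ZMOD a * d - b * c] := h1.mul_right w
    _ ≡ 1 [ZMOD a * d - b * c] := hw
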